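/- arXiv:1712.01822 — 2 statements merged into one kernel-verified Lean document; each statement's English description precedes it below -/
import Mathlib

section
/- Let k be a field and R a unital associative k-algebra. Then I⁺(E(R)) + I⁻(E(R)) = E(R); that is, every φ ∈ E(R) can be written as φ = φ⁺ + φ⁻ where φ⁺ ∈ E(R) has image contained in some t^{n′}R[[t]] and φ⁻ ∈ E(R) annihilates some tⁿR[[t]]. -/
/-- The lattice `tⁿR[[t]]` inside the formal Laurent series module `R((t))`:
series whose coefficients vanish in degrees `< n`. -/
def lat (R : Type*) [Ring R] (n : ℤ) : Set (LaurentSeries R) :=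
  {f | ∀ i : ℤ, i < n → f.coeff i = 0}

/-- An endomorphism of `R((t))` as a right `R`-module: an additive map commuting
with right multiplication by scalars `r ∈ R`. -/
def IsREndo {R : Type*} [Ring R] (φ : LaurentSeries R → LaurentSeries R) : Prop :=
  (∀ f g : LaurentSeries R, φ (f + g) = φ f + φ g) ∧
  (∀ (f : LaurentSeries R) (r : R), φ (f * HahnSeries.C r) = φ f * HahnSeries.C r)

/-- Membership in `E(R)`: a right `R`-module endomorphism `φ` of `R((t))` such that
(1) for every `n` there is `n′` with `φ(tⁿR[[t]]) ⊆ t^{n′}R[[t]]`, and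
(2) for every `m` there is `m′` with `φ(t^{m′}R[[t]]) ⊆ tᵐR[[t]]`. -/
def InE {R : Type*} [Ring R] (φ : LaurentSeries R → LaurentSeries R) : Prop :=
  IsREndo φ ∧
  (∀ n : ℤ, ∃ n' : ℤ, ∀ f ∈ lat R n, φ f ∈ lat R n') ∧
  (∀ m : ℤ, ∃ m' : ℤ, ∀ f ∈ lat R m', φ f ∈ lat R m)


/-- Membership in `I⁺(E(R))`: an element of `E(R)` whose image is contained in a
lattice `t^{n′}R[[t]]`. -/
def InIPlusE {R : Type*} [Ring R] (φ : LaurentSeries R → LaurentSeries R) : Prop :=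
  InE φ ∧ ∃ n' : ℤ, ∀ f : LaurentSeries R, φ f ∈ lat R n'

/-- Membership in `I⁻(E(R))`: an element of `E(R)` annihilating a lattice `tⁿR[[t]]`. -/
def InIMinusE {R : Type*} [Ring R] (φ : LaurentSeries R → LaurentSeries R) : Prop :=
  InE φ ∧ ∃ n : ℤ, ∀ f ∈ lat R n, φ f = 0

section Aux

variable {R : Type*} [Ring R]

/-- Truncation keeping only coefficients in degrees `≥ 0`. -/
noncomputable def trunc (f : LaurentSeries R) : LaurentSeries R :=
  { coeff := fun i => if 0 ≤ i then f.coeff i else 0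
    isPWO_support' := f.isPWO_support'.mono (by
      intro i hi
      simp only [Function.mem_support] at hi ⊢
      intro h
      apply hi
      simp [h]) }

@[simp] lemma trunc_coeff (f : LaurentSeries R) (i : ℤ) :
    (trunc f).coeff i = if 0 ≤ i then f.coeff i else 0 := rfl

lemma trunc_add (f g : LaurentSeries R) : trunc (f + g) = trunc f + trunc g := by
  ext i
  simp only [trunc_coeff, HahnSeries.coeff_add]
  split <;> simp

lemma trunc_mulC (f : LaurentSeries R) (r : R) :
    trunc (f * HahnSeries.C r) = trunc f * HahnSeries.C r := by
  ext i
  simp only [HahnSeries.C_apply, HahnSeries.coeff_mul_single_zero, trunc_coeff]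
  split <;> simp

lemma trunc_mem_lat (f : LaurentSeries R) (n : ℤ) (hf : f ∈ lat R n) :
    trunc f ∈ lat R n := by
  intro i hi
  simp only [trunc_coeff]
  split
  · exact hf i hi
  · rfl

lemma sub_trunc_mem_lat (f : LaurentSeries R) (n : ℤ) (hf : f ∈ lat R n) :
    f - trunc f ∈ lat R n := by
  intro i hi
  simp [HahnSeries.coeff_sub, hf i hi]

lemma trunc_eq_of_mem (f : LaurentSeries R) (hf : f ∈ lat R 0) : trunc f = f := by
  ext i
  simp only [trunc_coeff]
  by_cases h : 0 ≤ i
  · simp [h]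
  · simp [h, hf i (lt_of_not_ge h)]

lemma trunc_mem_lat_zero (f : LaurentSeries R) : trunc f ∈ lat R 0 := by
  intro i hi
  simp [not_le.mpr hi]

lemma phi_zero {φ : LaurentSeries R → LaurentSeries R} (h : IsREndo φ) : φ 0 = 0 := by
  have := h.1 0 0
  simp only [add_zero] at this
  exact (left_eq_add.mp this)

lemma phi_sub {φ : LaurentSeries R → LaurentSeries R} (h : IsREndo φ)
    (f g : LaurentSeries R) : φ (f - g) = φ f - φ g := by
  have hneg : φ (-g) = -φ g := by
    have := h.1 g (-g)
    rw [add_neg_cancel, phi_zero h] at this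
    linear_combination (norm := abel) -this
  rw [sub_eq_add_neg, h.1 f (-g), hneg, sub_eq_add_neg]

end Aux

/-- `I⁺(E(R)) + I⁻(E(R)) = E(R)`: every `φ ∈ E(R)` decomposes as
`φ = φ⁺ + φ⁻` with `φ⁺ ∈ E(R)` having image in some lattice and `φ⁻ ∈ E(R)`
annihilating some lattice. -/
theorem IPlusE_add_IMinusE_eq_E
    (k R : Type*) [Field k] [Ring R] [Algebra k R]
    (φ : LaurentSeries R → LaurentSeries R) (hφ : InE φ) :
    ∃ φp φm : LaurentSeries R → LaurentSeries R,
      InIPlusE φp ∧ InIMinusE φm ∧ ∀ f : LaurentSeries R, φ f = φp f + φm f := by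
  obtain ⟨hend, h1, h2⟩ := hφ
  obtain ⟨n₀, hn₀⟩ := h1 0
  refine ⟨fun f => φ (trunc f), fun f => φ (f - trunc f), ?_, ?_, ?_⟩
  · refine ⟨⟨⟨?_, ?_⟩, ?_, ?_⟩, n₀, ?_⟩
    · intro f g; show φ (trunc (f + g)) = _; rw [trunc_add, hend.1]
    · intro f r; show φ (trunc (f * HahnSeries.C r)) = _; rw [trunc_mulC, hend.2]
    · intro n
      exact ⟨n₀, fun f _ => hn₀ _ (trunc_mem_lat_zero f)⟩
    · intro m
      obtain ⟨m', hm'⟩ := h2 m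
      exact ⟨m', fun f hf => hm' _ (trunc_mem_lat f m' hf)⟩
    · intro f
      exact hn₀ _ (trunc_mem_lat_zero f)
  · refine ⟨⟨⟨?_, ?_⟩, ?_, ?_⟩, 0, ?_⟩
    · intro f g
      show φ (f + g - trunc (f + g)) = φ (f - trunc f) + φ (g - trunc g)
      rw [trunc_add, show f + g - (trunc f + trunc g) = (f - trunc f) + (g - trunc g) by abel,
        hend.1]
    · intro f r
      show φ (f * HahnSeries.C r - trunc (f * HahnSeries.C r)) = _
      rw [trunc_mulC, ← sub_mul, hend.2]
    · intro n
      obtain ⟨n', hn'⟩ := h1 n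
      exact ⟨n', fun f hf => hn' _ (sub_trunc_mem_lat f n hf)⟩
    · intro m
      refine ⟨0, fun f hf => ?_⟩
      show φ (f - trunc f) ∈ lat R m
      rw [trunc_eq_of_mem f hf, sub_self, phi_zero hend]
      intro i _; simp
    · intro f hf
      show φ (f - trunc f) = 0
      rw [trunc_eq_of_mem f hf, sub_self, phi_zero hend]
  · intro f
    show φ f = φ (trunc f) + φ (f - trunc f)
    rw [← hend.1, add_sub_cancel]
end

section
/- Let R be a unital associative algebra over a field k and n ≥ 1 an integer. There is an isomorphism of unital k-algebras between the matrix algebra M_n(E(R)) of (n×n)-matrices with entries in E(R) and E(R) itself; consequently, the Lie algebras gl_n(E(R)) and gl_top(∞,R) (the Lie algebra of E(R) under the commutator bracket) are isomorphic as Lie algebras over k. -/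
/-- Multiplication of `n × n` matrices whose entries are endomorphisms of `R((t))`:
`(A·B)_{i,j} = Σ_l A_{i,l} ∘ B_{l,j}`. -/
def matMulE {R : Type*} [Ring R] {n : ℕ}
    (A B : Matrix (Fin n) (Fin n) (LaurentSeries R → LaurentSeries R)) :
    Matrix (Fin n) (Fin n) (LaurentSeries R → LaurentSeries R) :=
  fun i j => fun f => ∑ l : Fin n, A i l (B l j f)

/-- The identity `n × n` matrix of endomorphisms of `R((t))`. -/
def matOneE {R : Type*} [Ring R] {n : ℕ} :
    Matrix (Fin n) (Fin n) (LaurentSeries R → LaurentSeries R) :=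
  fun i j => if i = j then id else fun _ => 0

namespace MatEAux

variable {R : Type*} [Ring R]

theorem lat_mono {a b : ℤ} (h : b ≤ a) : lat R a ⊆ lat R b :=
  fun f hf i hi => hf i (lt_of_lt_of_le hi h)

theorem bddBelow_supp (f : LaurentSeries R) : BddBelow (Function.support f.coeff) := by
  rcases (Function.support f.coeff).eq_empty_or_nonempty with h | h
  · rw [h]; exact bddBelow_empty
  · exact ⟨f.isPWO_support.isWF.min h, fun a ha => f.isPWO_support.isWF.min_le h ha⟩

/-- extraction of the `j`-th strand -/
def str (n : ℤ) (hn : 0 < n) (j : ℤ) (f : LaurentSeries R) : LaurentSeries R :=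
  HahnSeries.ofSuppBddBelow (fun i => f.coeff (n * i + j)) (by
    obtain ⟨c, hc⟩ := bddBelow_supp f
    refine ⟨min 0 (c - j), fun i hi => ?_⟩
    have h1 : c ≤ n * i + j := hc hi
    rcases le_or_gt 0 i with h | h
    · exact le_trans (min_le_left _ _) h
    · have h2 : n * i ≤ 1 * i := mul_le_mul_of_nonpos_right hn (le_of_lt h)
      have : c - j ≤ i := by linarith
      exact le_trans (min_le_right _ _) this)

/-- insertion into the `j`-th strand -/
def unstr (n : ℤ) (hn : 0 < n) (j : ℤ) (g : LaurentSeries R) : LaurentSeries R :=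
  HahnSeries.ofSuppBddBelow (fun m => if m % n = j then g.coeff (m / n) else 0) (by
    obtain ⟨c, hc⟩ := bddBelow_supp g
    refine ⟨n * c, fun m hm => ?_⟩
    have hne : g.coeff (m / n) ≠ 0 := by
      intro h0
      apply hm
      simp only [h0, ite_self]
    have h1 : c ≤ m / n := hc hne
    have h2 : n * c ≤ n * (m / n) := mul_le_mul_of_nonneg_left h1 hn.le
    have h3 := Int.mul_ediv_add_emod m n
    have h4 := Int.emod_nonneg m (ne_of_gt hn)
    linarith)

variable {n : ℤ} {hn : 0 < n}

@[simp] theorem str_coeff {j : ℤ} {f : LaurentSeries R} {i : ℤ} :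
    (str n hn j f).coeff i = f.coeff (n * i + j) := rfl

@[simp] theorem unstr_coeff {j : ℤ} {g : LaurentSeries R} {m : ℤ} :
    (unstr n hn j g).coeff m = if m % n = j then g.coeff (m / n) else 0 := rfl

theorem str_add {j : ℤ} (f g : LaurentSeries R) :
    str n hn j (f + g) = str n hn j f + str n hn j g := by
  ext i; simp [HahnSeries.coeff_add]

theorem unstr_add {j : ℤ} (f g : LaurentSeries R) :
    unstr n hn j (f + g) = unstr n hn j f + unstr n hn j g := by
  ext m; simp [HahnSeries.coeff_add]; split <;> simp

theorem str_zero {j : ℤ} : str n hn j (0 : LaurentSeries R) = 0 := by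
  ext i; simp

theorem unstr_zero {j : ℤ} : unstr n hn j (0 : LaurentSeries R) = 0 := by
  ext m; simp

theorem unstr_sub {j : ℤ} (f g : LaurentSeries R) :
    unstr n hn j (f - g) = unstr n hn j f - unstr n hn j g := by
  ext m; simp [HahnSeries.coeff_sub]; split <;> simp

theorem unstr_smul {k : Type*} [Field k] [Algebra k R] {j : ℤ} (c : k) (g : LaurentSeries R) :
    unstr n hn j (c • g) = c • unstr n hn j g := by
  ext m; simp only [HahnSeries.coeff_smul, unstr_coeff]; split <;> simp

theorem str_C {j : ℤ} (f : LaurentSeries R) (r : R) :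
    str n hn j (f * HahnSeries.C r) = str n hn j f * HahnSeries.C r := by
  ext i
  simp [HahnSeries.C_apply, HahnSeries.coeff_mul_single_zero]

theorem unstr_C {j : ℤ} (g : LaurentSeries R) (r : R) :
    unstr n hn j (g * HahnSeries.C r) = unstr n hn j g * HahnSeries.C r := by
  ext m
  simp only [HahnSeries.C_apply, HahnSeries.coeff_mul_single_zero, unstr_coeff]
  split <;> simp

theorem sum_coeff {α : Type*} (s : Finset α) (g : α → LaurentSeries R) (m : ℤ) :
    (∑ x ∈ s, g x).coeff m = ∑ x ∈ s, (g x).coeff m := by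
  classical
  induction s using Finset.cons_induction with
  | empty => simp
  | cons a s ha ih => simp [Finset.sum_insert ha, HahnSeries.coeff_add, ih]

theorem addmap_zero {φ : LaurentSeries R → LaurentSeries R}
    (h : ∀ a b, φ (a + b) = φ a + φ b) : φ 0 = 0 := by
  have := h 0 0
  rw [add_zero] at this
  exact (left_eq_add.mp this)

theorem addmap_sum {α : Type*} {φ : LaurentSeries R → LaurentSeries R}
    (h : ∀ a b, φ (a + b) = φ a + φ b) (s : Finset α) (g : α → LaurentSeries R) :
    φ (∑ x ∈ s, g x) = ∑ x ∈ s, φ (g x) := by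
  classical
  induction s using Finset.cons_induction with
  | empty => simpa using addmap_zero h
  | cons a s ha ih => rw [Finset.sum_cons, h, ih, Finset.sum_cons]

-- key arithmetic helper
theorem ediv_lt_of_lt_mul {a m n : ℤ} (hn : 0 < n) (h : a < m * n) : a / n < m := by
  by_contra hc
  push_neg at hc
  have := (Int.le_ediv_iff_mul_le hn).mp hc
  linarith

section FinStuff
variable {N : ℕ} (hN : 0 < ((N : ℕ) : ℤ))

theorem str_unstr (j l : Fin N) (g : LaurentSeries R) :
    str (N : ℤ) hN (j : ℤ) (unstr (N : ℤ) hN (l : ℤ) g) = if j = l then g else 0 := by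
  have hj0 : (0 : ℤ) ≤ (j : ℤ) := Int.natCast_nonneg _
  have hjn : ((j : ℕ) : ℤ) < (N : ℤ) := by exact_mod_cast j.isLt
  ext i
  have h1 : ((j : ℤ) + (N : ℤ) * i) % (N : ℤ) = (j : ℤ) := by
    rw [Int.add_mul_emod_self_left, Int.emod_eq_of_lt hj0 hjn]
  have h2 : ((j : ℤ) + (N : ℤ) * i) / (N : ℤ) = i := by
    rw [Int.add_mul_ediv_left _ _ (ne_of_gt hN), Int.ediv_eq_zero_of_lt hj0 hjn, zero_add]
  have hco : (N : ℤ) * i + (j : ℤ) = (j : ℤ) + (N : ℤ) * i := by ring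
  by_cases h : j = l
  · subst h
    simp [str_coeff, unstr_coeff, hco, h1, h2]
  · have h' : (j : ℤ) ≠ (l : ℤ) := by
      intro hc; exact h (Fin.ext (by exact_mod_cast hc))
    simp only [if_neg h, str_coeff, unstr_coeff, hco, h1, h2, if_neg h', HahnSeries.coeff_zero]

theorem sum_unstr_str (f : LaurentSeries R) :
    ∑ i : Fin N, unstr (N : ℤ) hN (i : ℤ) (str (N : ℤ) hN (i : ℤ) f) = f := by
  ext m
  rw [sum_coeff]
  have h4 : 0 ≤ m % (N : ℤ) := Int.emod_nonneg m (ne_of_gt hN)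
  have h5 : m % (N : ℤ) < (N : ℤ) := Int.emod_lt_of_pos m hN
  have h6 : (m % (N : ℤ)).toNat < N := by omega
  set i₀ : Fin N := ⟨(m % (N : ℤ)).toNat, h6⟩ with hi₀
  have hcast : ((i₀ : ℕ) : ℤ) = m % (N : ℤ) := by
    simp [hi₀, Int.toNat_of_nonneg h4]
  rw [Finset.sum_eq_single i₀]
  · rw [unstr_coeff, hcast, if_pos rfl, str_coeff]
    congr 1
    have := Int.mul_ediv_add_emod m (N : ℤ)
    linarith
  · intro b _ hb
    rw [unstr_coeff, if_neg]
    intro hc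
    apply hb
    apply Fin.ext
    have : ((i₀ : ℕ) : ℤ) = ((b : ℕ) : ℤ) := hcast.trans hc
    exact_mod_cast this.symm
  · intro h; exact absurd (Finset.mem_univ i₀) h

end FinStuff

theorem InE_str {j : ℤ} (hj0 : 0 ≤ j) (hjn : j < n) : InE (str n hn j (R := R)) := by
  refine ⟨⟨fun f g => str_add f g, fun f r => str_C f r⟩, ?_, ?_⟩
  · intro m
    refine ⟨min m 0, fun f hf i hi => ?_⟩
    rw [str_coeff]
    apply hf
    have hi1 : i < m := lt_of_lt_of_le hi (min_le_left _ _)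
    have hi2 : i < 0 := lt_of_lt_of_le hi (min_le_right _ _)
    have h2 : n * (i + 1) ≤ 1 * (i + 1) := mul_le_mul_of_nonpos_right hn (by linarith)
    have h3 : n * (i + 1) = n * i + n := by ring
    linarith
  · intro m
    refine ⟨n * m, fun f hf i hi => ?_⟩
    rw [str_coeff]
    apply hf
    have h2 : n * i ≤ n * (m - 1) := mul_le_mul_of_nonneg_left (by linarith) hn.le
    have h3 : n * (m - 1) = n * m - n := by ring
    linarith

theorem InE_unstr {j : ℤ} (hj0 : 0 ≤ j) (hjn : j < n) : InE (unstr n hn j (R := R)) := by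
  refine ⟨⟨fun f g => unstr_add f g, fun f r => unstr_C f r⟩, ?_, ?_⟩
  · intro m
    refine ⟨n * m, fun f hf i hi => ?_⟩
    rw [unstr_coeff]
    split
    · apply hf
      exact ediv_lt_of_lt_mul hn (by linarith [hi])
    · rfl
  · intro m
    refine ⟨max m 1, fun f hf i hi => ?_⟩
    rw [unstr_coeff]
    split
    · apply hf
      rcases le_or_gt 0 i with h | h
      · have : i / n ≤ i := Int.ediv_le_self n h
        exact lt_of_le_of_lt this (lt_of_lt_of_le hi (le_max_left _ _))
      · have : i / n < 1 := ediv_lt_of_lt_mul hn (by linarith)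
        exact lt_of_lt_of_le this (le_max_right _ _)
    · rfl

theorem InE_zero : InE (fun _ => (0 : LaurentSeries R)) := by
  refine ⟨⟨fun f g => by simp, fun f r => by simp⟩, ?_, ?_⟩
  · intro m; exact ⟨0, fun f _ i _ => rfl⟩
  · intro m; exact ⟨0, fun f _ i _ => rfl⟩

theorem InE_add {φ ψ : LaurentSeries R → LaurentSeries R} (hφ : InE φ) (hψ : InE ψ) :
    InE (fun f => φ f + ψ f) := by
  obtain ⟨⟨ha1, ha2⟩, hb, hc⟩ := hφ
  obtain ⟨⟨ha1', ha2'⟩, hb', hc'⟩ := hψ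
  refine ⟨⟨fun f g => by simp only [ha1, ha1']; abel,
    fun f r => by simp only [ha2, ha2', add_mul]⟩, ?_, ?_⟩
  · intro m
    obtain ⟨p, hp⟩ := hb m
    obtain ⟨q, hq⟩ := hb' m
    refine ⟨min p q, fun f hf i hi => ?_⟩
    rw [HahnSeries.coeff_add,
      lat_mono (min_le_left p q) (hp f hf) i hi,
      lat_mono (min_le_right p q) (hq f hf) i hi, add_zero]
  · intro m
    obtain ⟨p, hp⟩ := hc m
    obtain ⟨q, hq⟩ := hc' m
    refine ⟨max p q, fun f hf i hi => ?_⟩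
    rw [HahnSeries.coeff_add,
      hp f (lat_mono (le_max_left p q) hf) i hi,
      hq f (lat_mono (le_max_right p q) hf) i hi, add_zero]

theorem InE_comp {φ ψ : LaurentSeries R → LaurentSeries R} (hφ : InE φ) (hψ : InE ψ) :
    InE (fun f => φ (ψ f)) := by
  obtain ⟨⟨ha1, ha2⟩, hb, hc⟩ := hφ
  obtain ⟨⟨ha1', ha2'⟩, hb', hc'⟩ := hψ
  refine ⟨⟨fun f g => by simp only [ha1', ha1], fun f r => by simp only [ha2', ha2]⟩, ?_, ?_⟩
  · intro m
    obtain ⟨p, hp⟩ := hb' m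
    obtain ⟨q, hq⟩ := hb p
    exact ⟨q, fun f hf => hq _ (hp f hf)⟩
  · intro m
    obtain ⟨p, hp⟩ := hc m
    obtain ⟨q, hq⟩ := hc' p
    exact ⟨q, fun f hf => hp _ (hq f hf)⟩

theorem InE_sum {α : Type*} (s : Finset α) (F : α → (LaurentSeries R → LaurentSeries R))
    (h : ∀ x ∈ s, InE (F x)) : InE (fun f => ∑ x ∈ s, F x f) := by
  classical
  induction s using Finset.cons_induction with
  | empty => simpa using InE_zero
  | cons a s ha ih =>
    have : InE (fun f => F a f + ∑ x ∈ s, F x f) :=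
      InE_add (h a (Finset.mem_cons_self a s)) (ih (fun x hx => h x (Finset.mem_cons_of_mem hx)))
    simpa [Finset.sum_insert ha] using this

end MatEAux

namespace MatEAux2

open MatEAux

variable {R : Type*} [Ring R] {N : ℕ} (hN : 0 < ((N : ℕ) : ℤ))

/-- the map `M_N(E) → E` -/
def TT (A : Matrix (Fin N) (Fin N) (LaurentSeries R → LaurentSeries R)) :
    LaurentSeries R → LaurentSeries R :=
  fun f => ∑ i : Fin N, ∑ j : Fin N,
    unstr (N : ℤ) hN (i : ℤ) (A i j (str (N : ℤ) hN (j : ℤ) f))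

theorem str_TT_apply (B : Matrix (Fin N) (Fin N) (LaurentSeries R → LaurentSeries R))
    (hB : ∀ i j, InE (B i j)) (l : Fin N) (f : LaurentSeries R) :
    str (N : ℤ) hN (l : ℤ) (TT hN B f)
      = ∑ q : Fin N, B l q (str (N : ℤ) hN (q : ℤ) f) := by
  have e : TT hN B f = ∑ p : Fin N, ∑ q : Fin N,
      unstr (N : ℤ) hN (p : ℤ) (B p q (str (N : ℤ) hN (q : ℤ) f)) := rfl
  rw [e, addmap_sum (fun a b => str_add a b)]
  have h1 : ∀ p : Fin N,
      str (N : ℤ) hN (l : ℤ) (∑ q : Fin N,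
          unstr (N : ℤ) hN (p : ℤ) (B p q (str (N : ℤ) hN (q : ℤ) f)))
      = if l = p then ∑ q : Fin N, B p q (str (N : ℤ) hN (q : ℤ) f) else 0 := by
    intro p
    rw [addmap_sum (fun a b => str_add a b)]
    by_cases hlp : l = p
    · subst hlp; simp [str_unstr hN]
    · simp [str_unstr hN, hlp]
  rw [Finset.sum_congr rfl fun p _ => h1 p]
  simp

theorem str_TT (A : Matrix (Fin N) (Fin N) (LaurentSeries R → LaurentSeries R))
    (hA : ∀ i j, InE (A i j)) (i j : Fin N) (g : LaurentSeries R) :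
    str (N : ℤ) hN (i : ℤ) (TT hN A (unstr (N : ℤ) hN (j : ℤ) g)) = A i j g := by
  rw [str_TT_apply hN A hA i (unstr (N : ℤ) hN (j : ℤ) g)]
  have h0 : ∀ q : Fin N, (A i q) 0 = 0 := fun q => addmap_zero (hA i q).1.1
  have h1 : ∀ q : Fin N,
      A i q (str (N : ℤ) hN (q : ℤ) (unstr (N : ℤ) hN (j : ℤ) g))
        = if q = j then A i j g else 0 := by
    intro q
    rw [str_unstr hN q j]
    by_cases h : q = j
    · subst h; simp
    · simp [h, h0]
  rw [Finset.sum_congr rfl fun q _ => h1 q]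
  simp

theorem TT_add (A B : Matrix (Fin N) (Fin N) (LaurentSeries R → LaurentSeries R)) :
    TT hN (A + B) = TT hN A + TT hN B := by
  funext f
  simp only [TT, Matrix.add_apply, Pi.add_apply, unstr_add, Finset.sum_add_distrib]

theorem TT_sub (A B : Matrix (Fin N) (Fin N) (LaurentSeries R → LaurentSeries R)) :
    TT hN (A - B) = TT hN A - TT hN B := by
  funext f
  simp only [TT, Matrix.sub_apply, Pi.sub_apply, unstr_sub, Finset.sum_sub_distrib]

theorem TT_smul {k : Type*} [Field k] [Algebra k R] (c : k)
    (A : Matrix (Fin N) (Fin N) (LaurentSeries R → LaurentSeries R)) :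
    TT hN (c • A) = c • TT hN A := by
  funext f
  simp only [TT, Matrix.smul_apply, Pi.smul_apply, unstr_smul, Finset.smul_sum]

theorem TT_one : TT hN (matOneE (R := R) (n := N)) = id := by
  funext f
  have h1 : ∀ i : Fin N, ∑ j : Fin N,
      unstr (N : ℤ) hN (i : ℤ) ((if i = j then id else fun _ => 0)
        (str (N : ℤ) hN (j : ℤ) f))
      = unstr (N : ℤ) hN (i : ℤ) (str (N : ℤ) hN (i : ℤ) f) := by
    intro i
    rw [Finset.sum_eq_single i]
    · simp
    · intro b _ hb
      rw [if_neg (fun h => hb h.symm)]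
      exact unstr_zero
    · intro h; exact absurd (Finset.mem_univ i) h
  show (∑ i : Fin N, ∑ j : Fin N,
      unstr (N : ℤ) hN (i : ℤ) (matOneE i j (str (N : ℤ) hN (j : ℤ) f))) = f
  simp only [matOneE]
  rw [Finset.sum_congr rfl fun i _ => h1 i, sum_unstr_str hN f]

theorem TT_mul (A B : Matrix (Fin N) (Fin N) (LaurentSeries R → LaurentSeries R))
    (hA : ∀ i j, InE (A i j)) (hB : ∀ i j, InE (B i j)) :
    TT hN (matMulE A B) = fun f => TT hN A (TT hN B f) := by
  funext f
  have e1 : TT hN (matMulE A B) f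
      = ∑ i : Fin N, ∑ j : Fin N, ∑ l : Fin N,
        unstr (N : ℤ) hN (i : ℤ) (A i l (B l j (str (N : ℤ) hN (j : ℤ) f))) := by
    refine Finset.sum_congr rfl fun i _ => Finset.sum_congr rfl fun j _ => ?_
    exact addmap_sum (fun a b => unstr_add a b) _ _
  have e2 : TT hN A (TT hN B f)
      = ∑ i : Fin N, ∑ l : Fin N, ∑ j : Fin N,
        unstr (N : ℤ) hN (i : ℤ) (A i l (B l j (str (N : ℤ) hN (j : ℤ) f))) := by
    have e : TT hN A (TT hN B f) = ∑ i : Fin N, ∑ l : Fin N,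
        unstr (N : ℤ) hN (i : ℤ) (A i l (str (N : ℤ) hN (l : ℤ) (TT hN B f))) := rfl
    rw [e]
    refine Finset.sum_congr rfl fun i _ => Finset.sum_congr rfl fun l _ => ?_
    rw [str_TT_apply hN B hB l f, addmap_sum (hA i l).1.1,
      addmap_sum (fun a b => unstr_add a b)]
  rw [e1, e2]
  exact Finset.sum_congr rfl fun i _ => Finset.sum_comm

theorem InE_TT (A : Matrix (Fin N) (Fin N) (LaurentSeries R → LaurentSeries R))
    (hA : ∀ i j, InE (A i j)) : InE (TT hN A) := by
  have hlt : ∀ i : Fin N, ((i : ℕ) : ℤ) < (N : ℤ) := fun i => by exact_mod_cast i.isLt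
  exact InE_sum Finset.univ _ (fun i _ => InE_sum Finset.univ _ (fun j _ =>
    InE_comp (InE_unstr (Int.natCast_nonneg _) (hlt i))
      (InE_comp (hA i j) (InE_str (Int.natCast_nonneg _) (hlt j)))))

theorem TT_inj (A B : Matrix (Fin N) (Fin N) (LaurentSeries R → LaurentSeries R))
    (hA : ∀ i j, InE (A i j)) (hB : ∀ i j, InE (B i j)) (h : TT hN A = TT hN B) :
    A = B := by
  funext i j g
  rw [← str_TT hN A hA i j g, ← str_TT hN B hB i j g, h]

theorem TT_surj (φ : LaurentSeries R → LaurentSeries R) (hφ : InE φ) :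
    ∃ A : Matrix (Fin N) (Fin N) (LaurentSeries R → LaurentSeries R),
      (∀ i j, InE (A i j)) ∧ TT hN A = φ := by
  have hlt : ∀ i : Fin N, ((i : ℕ) : ℤ) < (N : ℤ) := fun i => by exact_mod_cast i.isLt
  refine ⟨fun i j => fun g => str (N : ℤ) hN (i : ℤ) (φ (unstr (N : ℤ) hN (j : ℤ) g)),
    fun i j => InE_comp (InE_str (Int.natCast_nonneg _) (hlt i))
      (InE_comp hφ (InE_unstr (Int.natCast_nonneg _) (hlt j))), ?_⟩
  funext f
  show (∑ i : Fin N, ∑ j : Fin N, unstr (N : ℤ) hN (i : ℤ)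
      (str (N : ℤ) hN (i : ℤ) (φ (unstr (N : ℤ) hN (j : ℤ)
        (str (N : ℤ) hN (j : ℤ) f))))) = φ f
  rw [Finset.sum_comm]
  have h2 : ∀ j : Fin N,
      (∑ i : Fin N, unstr (N : ℤ) hN (i : ℤ) (str (N : ℤ) hN (i : ℤ)
        (φ (unstr (N : ℤ) hN (j : ℤ) (str (N : ℤ) hN (j : ℤ) f)))))
      = φ (unstr (N : ℤ) hN (j : ℤ) (str (N : ℤ) hN (j : ℤ) f)) :=
    fun j => sum_unstr_str hN _
  rw [Finset.sum_congr rfl fun j _ => h2 j]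
  rw [← addmap_sum hφ.1.1, sum_unstr_str hN f]

end MatEAux2


/-- for `n ≥ 1` there is an isomorphism of unital `k`-algebras
`M_n(E(R)) ≅ E(R)`: a map `T` on matrices of endomorphisms which sends matrices with
entries in `E(R)` into `E(R)`, is additive, `k`-linear, multiplicative and unital on
such matrices, and restricts to a bijection between `M_n(E(R))` and `E(R)`.
Consequently `T` preserves commutator brackets, so the Lie algebras `gl_n(E(R))` and
`gl_top(∞,R)` (the Lie algebra of `E(R)`) are isomorphic as Lie algebras over `k`. -/
theorem matrix_E_iso_E
    (k R : Type*) [Field k] [Ring R] [Algebra k R] (n : ℕ) (hn : 1 ≤ n) :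
    ∃ T : Matrix (Fin n) (Fin n) (LaurentSeries R → LaurentSeries R) →
          (LaurentSeries R → LaurentSeries R),
      (∀ A, (∀ i j, InE (A i j)) → InE (T A)) ∧
      (∀ A B, (∀ i j, InE (A i j)) → (∀ i j, InE (B i j)) →
        T (A + B) = T A + T B) ∧
      (∀ (c : k) (A), (∀ i j, InE (A i j)) → T (c • A) = c • T A) ∧
      (∀ A B, (∀ i j, InE (A i j)) → (∀ i j, InE (B i j)) →
        T (matMulE A B) = fun f => T A (T B f)) ∧
      T matOneE = id ∧
      (∀ A B, (∀ i j, InE (A i j)) → (∀ i j, InE (B i j)) → T A = T B → A = B) ∧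
      (∀ φ, InE φ → ∃ A, (∀ i j, InE (A i j)) ∧ T A = φ) ∧
      -- the induced isomorphism of Lie algebras gl_n(E(R)) ≅ gl_top(∞,R):
      (∀ A B, (∀ i j, InE (A i j)) → (∀ i j, InE (B i j)) →
        T (matMulE A B - matMulE B A) = fun f => T A (T B f) - T B (T A f)) := by
  have hN : 0 < ((n : ℕ) : ℤ) := by exact_mod_cast hn
  refine ⟨MatEAux2.TT hN, fun A hA => MatEAux2.InE_TT hN A hA,
    fun A B _ _ => MatEAux2.TT_add hN A B,
    fun c A _ => MatEAux2.TT_smul hN c A,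
    fun A B hA hB => MatEAux2.TT_mul hN A B hA hB,
    MatEAux2.TT_one hN,
    fun A B hA hB h => MatEAux2.TT_inj hN A B hA hB h,
    fun φ hφ => MatEAux2.TT_surj hN φ hφ,
    fun A B hA hB => ?_⟩
  rw [MatEAux2.TT_sub hN, MatEAux2.TT_mul hN A B hA hB, MatEAux2.TT_mul hN B A hB hA]
  funext f
  simp [Pi.sub_apply]
end
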